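/- Let 0 < p < 1, κ > 0, k > 0, and set m = min{κ, k}. The function V(x) = (m^p/(p(κ(1-p)+mp)))·x^p satisfies, for all x > 0, the equation β V(x) + (μ²/(2σ²))·V'(x)²/V''(x) + (m x - r x)V'(x) - (m x)^p/p = 0, where β, r, μ, σ > 0 are such that κ = (β - p(μ²/(2σ²(1-p)) + r))/(1-p). -/

import Mathlib

/-- The value function `V(x) = m^p x^p/(p(κ(1-p)+mp))`, with `m = min{κ,k}`, satisfies
the HJB-type equation
`β V(x) + (μ²/(2σ²)) V'(x)²/V''(x) + (mx - rx) V'(x) - (mx)^p/p = 0` for all `x > 0`,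
where `V'` and `V''` are given by their explicit formulas. -/
theorem stmt6 (β r μ σ p k θ κ m : ℝ)
    (hβ : 0 < β) (hr : 0 < r) (hμ : 0 < μ) (hσ : 0 < σ)
    (hp0 : 0 < p) (hp1 : p < 1) (hk : 0 < k)
    (hθ : θ = μ ^ 2 / (2 * σ ^ 2 * (1 - p)))
    (hκ : κ = (β - p * (θ + r)) / (1 - p))
    (hκpos : 0 < κ)
    (hm : m = min κ k) :
    ∀ x : ℝ, 0 < x →
      β * (m ^ p * x ^ p / (p * (κ * (1 - p) + m * p)))
        + μ ^ 2 / (2 * σ ^ 2) *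
            (m ^ p * x ^ (p - 1) / (κ * (1 - p) + m * p)) ^ 2 /
            ((p - 1) * m ^ p * x ^ (p - 2) / (κ * (1 - p) + m * p))
        + (m * x - r * x) * (m ^ p * x ^ (p - 1) / (κ * (1 - p) + m * p))
        - (m * x) ^ p / p = 0 := by
  intro x hx
  have h1p : (0:ℝ) < 1 - p := by linarith
  have hm0 : 0 < m := by rw [hm]; exact lt_min hκpos hk
  have hD : 0 < κ * (1 - p) + m * p := by positivity
  have hxp : (0:ℝ) < x ^ p := Real.rpow_pos_of_pos hx p
  have hmp : (0:ℝ) < m ^ p := Real.rpow_pos_of_pos hm0 p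
  have hβ' : β = κ * (1 - p) + p * (θ + r) := by
    rw [hκ]; field_simp; ring
  have hμ2 : μ ^ 2 = θ * (2 * σ ^ 2 * (1 - p)) := by
    rw [hθ]; field_simp
  have e1 : x ^ (p - 1) = x ^ p / x := by
    rw [Real.rpow_sub hx, Real.rpow_one]
  have e2 : x ^ (p - 2) = x ^ p / (x * x) := by
    rw [Real.rpow_sub hx]
    norm_num [sq]
  have e3 : (m * x) ^ p = m ^ p * x ^ p :=
    Real.mul_rpow hm0.le hx.le
  rw [e1, e2, e3, hβ', hμ2]
  have hp1' : p - 1 ≠ 0 := by linarith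
  have hσ' : σ ≠ 0 := hσ.ne'
  field_simp
  ring
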